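/- Let A be a unital C*-algebra, α : A → A a *-endomorphism with kernel I, and J a closed ideal orthogonal to I (i.e. I ∩ J = {0}). On A_J := (A/I) ⊕ (A/J), define α_J((a+I) ⊕ (b+J)) = (α(a)+I) ⊕ (α(a)+J). Then α_J is a well-defined *-endomorphism of A_J, ker α_J = {0} ⊕ (A/J), and the annihilator of ker α_J in A_J equals (A/I) ⊕ {0}; in particular ker α_J is a unital ideal with unit 0 ⊕ (1+J). -/
import Mathlib


/-- Let `α` be a *-endomorphism of a unital C*-algebra `A` with kernel `I`,
and `J` a closed ideal with `I ∩ J = {0}`. Realizing the quotients `A/I` and `A/J` as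
codomains of surjective *-homomorphisms `qI`, `qJ` with the corresponding kernels, the
formula `α_J(qI a, qJ b) = (qI (α a), qJ (α a))` gives a well-defined *-endomorphism `β`
of `A_J = (A/I) ⊕ (A/J)`, whose kernel is `{0} ⊕ A/J`, whose kernel's annihilator is
`(A/I) ⊕ {0}`, and the kernel is unital with unit `(0, 1)`. -/
theorem extension_endomorphism_properties
    {A : Type*} [CStarAlgebra A]
    {B : Type*} [CStarAlgebra B] {C : Type*} [CStarAlgebra C]
    (α : A →⋆ₐ[ℂ] A) (J : TwoSidedIdeal A) (hJc : IsClosed (J : Set A))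
    (horth : {a : A | α a = 0} ∩ (J : Set A) = {0})
    (qI : A →⋆ₐ[ℂ] B) (hqI : Function.Surjective qI)
    (hkerI : ∀ a : A, qI a = 0 ↔ α a = 0)
    (qJ : A →⋆ₐ[ℂ] C) (hqJ : Function.Surjective qJ)
    (hkerJ : ∀ a : A, qJ a = 0 ↔ a ∈ J) :
    ∃ β : (B × C) →⋆ₐ[ℂ] (B × C),
      (∀ a b : A, β (qI a, qJ b) = (qI (α a), qJ (α a))) ∧
      {x : B × C | β x = 0} = {x : B × C | x.1 = 0} ∧
      {x : B × C | ∀ y : B × C, β y = 0 → x * y = 0} = {x : B × C | x.2 = 0} ∧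
      β (0, 1) = 0 ∧
      (∀ y : B × C, β y = 0 → ((0, 1) : B × C) * y = y ∧ y * ((0, 1) : B × C) = y) := by
  classical
  set F : A →⋆ₐ[ℂ] B × C := ((qI.comp α).prod (qJ.comp α)) with hF
  have hFa : ∀ a : A, F a = (qI (α a), qJ (α a)) := fun a => rfl
  -- F factors through qI
  have key : ∀ a a' : A, qI a = qI a' → F a = F a' := by
    intro a a' h
    have h0 : qI (a - a') = 0 := by rw [map_sub, h, sub_self]
    have hα : α (a - a') = 0 := (hkerI _).mp h0
    have : α a = α a' := by
      rw [map_sub] at hα; exact sub_eq_zero.mp hα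
    simp [hFa, this]
  set s : B → A := Function.surjInv hqI with hs
  have hsq : ∀ b : B, qI (s b) = b := fun b => Function.surjInv_eq hqI b
  set g : B × C → B × C := fun x => F (s x.1) with hg
  have hgq : ∀ (a : A) (c : C), g (qI a, c) = F a := by
    intro a c
    exact key _ _ (hsq (qI a))
  have hadd : ∀ x y : B × C, g (x + y) = g x + g y := by
    intro x y
    have : g (x + y) = F (s x.1 + s y.1) := by
      refine key _ _ ?_
      rw [hsq, map_add, hsq, hsq]; rfl
    rw [this, map_add]
  have hmul : ∀ x y : B × C, g (x * y) = g x * g y := by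
    intro x y
    have : g (x * y) = F (s x.1 * s y.1) := by
      refine key _ _ ?_
      rw [hsq, map_mul, hsq, hsq]; rfl
    rw [this, map_mul]
  have hone : g 1 = 1 := by
    have : g 1 = F 1 := key _ _ (by rw [hsq, map_one]; rfl)
    rw [this, map_one]
  have hzero : g 0 = 0 := by
    have : g 0 = F 0 := key _ _ (by rw [hsq, map_zero]; rfl)
    rw [this, map_zero]
  have hstar : ∀ x : B × C, g (star x) = star (g x) := by
    intro x
    have : g (star x) = F (star (s x.1)) := by
      refine key _ _ ?_
      rw [hsq, map_star, hsq]; rfl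
    rw [this, map_star]
  have hcomm : ∀ r : ℂ, g (algebraMap ℂ (B × C) r) = algebraMap ℂ (B × C) r := by
    intro r
    have : g (algebraMap ℂ (B × C) r) = F (algebraMap ℂ A r) := by
      refine key _ _ ?_
      rw [hsq, AlgHomClass.commutes]
      rfl
    rw [this, AlgHomClass.commutes]
  have hker : ∀ x : B × C, g x = 0 ↔ x.1 = 0 := by
    intro x
    constructor
    · intro h
      have hFa0 : F (s x.1) = 0 := h
      have h1 : qI (α (s x.1)) = 0 := congrArg Prod.fst hFa0
      have h2 : qJ (α (s x.1)) = 0 := congrArg Prod.snd hFa0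
      have hmem : α (s x.1) ∈ ({a : A | α a = 0} ∩ (J : Set A)) :=
        ⟨(hkerI _).mp h1, (hkerJ _).mp h2⟩
      rw [horth] at hmem
      have : qI (s x.1) = 0 := (hkerI _).mpr hmem
      rw [hsq] at this
      exact this
    · intro h
      have h0 : qI (s x.1) = 0 := by rw [hsq]; exact h
      have hα : α (s x.1) = 0 := (hkerI _).mp h0
      show F (s x.1) = 0
      rw [hFa, hα, map_zero, map_zero]
      rfl
  refine ⟨⟨⟨⟨⟨⟨g, hone⟩, hmul⟩, hzero, hadd⟩, hcomm⟩, hstar⟩, ?_, ?_, ?_, ?_, ?_⟩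
  · intro a b
    exact hgq a (qJ b)
  · ext x
    exact hker x
  · ext x
    simp only [Set.mem_setOf_eq]
    constructor
    · intro h
      have h01 : g ((0 : B), (1 : C)) = 0 := (hker _).mpr rfl
      have := h (0, 1) h01
      have h2 : x.2 * 1 = 0 := congrArg Prod.snd this
      rwa [mul_one] at h2
    · intro h y hy
      have hy1 : y.1 = 0 := (hker y).mp hy
      have : x * y = (x.1 * y.1, x.2 * y.2) := rfl
      rw [this, hy1, h, mul_zero, zero_mul]
      rfl
  · exact (hker _).mpr rfl
  · intro y hy
    have hy1 : y.1 = 0 := (hker y).mp hy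
    constructor
    · have h1 : ((0, 1) : B × C) * y = (0 * y.1, 1 * y.2) := rfl
      rw [h1, zero_mul, one_mul, ← hy1]
    · have h1 : y * ((0, 1) : B × C) = (y.1 * 0, y.2 * 1) := rfl
      rw [h1, mul_zero, mul_one, ← hy1]
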